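/- For every n ≥ 2, if A is an uncountable compact subset of L (in the Euclidean topology), then the space (X, τ(A)) is perfect but not Lindelöf, and likewise the space (X, τ(L \ A)) is perfect but not Lindelöf. -/
import Mathlib


open Metric Set TopologicalSpace

noncomputable section

/-- The last coordinate `x (n-1)` of a point of `EuclideanSpace ℝ (Fin n)`
(junk value `0` if `n = 0`). -/
def lastCoord (n : ℕ) (x : EuclideanSpace ℝ (Fin n)) : ℝ :=
  if h : 0 < n then x ⟨n - 1, Nat.sub_lt h one_pos⟩ else 0

/-- The closed upper half-space `X = {x : x (n-1) ≥ 0}`. -/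
def HalfSpace (n : ℕ) : Set (EuclideanSpace ℝ (Fin n)) := {x | 0 ≤ lastCoord n x}

/-- The open upper half-space `P = {x : x (n-1) > 0}`. -/
def OpenHalf (n : ℕ) : Set (EuclideanSpace ℝ (Fin n)) := {x | 0 < lastCoord n x}

/-- The boundary hyperplane `L = {x : x (n-1) = 0}`. -/
def Bdry (n : ℕ) : Set (EuclideanSpace ℝ (Fin n)) := {x | lastCoord n x = 0}

/-- The `n`-th standard basis vector `e` (junk value `0` if `n = 0`). -/
def eVec (n : ℕ) : EuclideanSpace ℝ (Fin n) :=
  if h : 0 < n then EuclideanSpace.single ⟨n - 1, Nat.sub_lt h one_pos⟩ (1 : ℝ) else 0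

/-- The tangent ball `B̃(a, ε) = {a} ∪ B(a + ε • e, ε)`. -/
def tangentBall (n : ℕ) (a : EuclideanSpace ℝ (Fin n)) (ε : ℝ) :
    Set (EuclideanSpace ℝ (Fin n)) :=
  {a} ∪ ball (a + ε • eVec n) ε

/-- The generating family for the topology `τ(A)` on `X`:
balls `B(a,ε)` with `a ∈ P`, `0 < ε < a (n-1)`; traces `B(a,ε) ∩ X` with `a ∈ A`, `ε > 0`;
and tangent balls `B̃(a,ε)` with `a ∈ L \ A`, `ε > 0`. -/
def niemGen (n : ℕ) (A : Set (EuclideanSpace ℝ (Fin n))) : Set (Set (HalfSpace n)) :=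
  {s | ∃ a ∈ OpenHalf n, ∃ ε, 0 < ε ∧ ε < lastCoord n a ∧
      s = Subtype.val ⁻¹' ball a ε} ∪
  {s | ∃ a ∈ A, ∃ ε, 0 < ε ∧ s = Subtype.val ⁻¹' ball a ε} ∪
  {s | ∃ a ∈ Bdry n \ A, ∃ ε, 0 < ε ∧ s = Subtype.val ⁻¹' tangentBall n a ε}

/-- The topology `τ(A)` on `X`; `τ(∅)` is the Niemytzki topology `τ_N`. -/
def tau (n : ℕ) (A : Set (EuclideanSpace ℝ (Fin n))) : TopologicalSpace (HalfSpace n) :=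
  generateFrom (niemGen n A)

/-- The inclusion of `L` into `X`. -/
def inclLX (n : ℕ) (x : Bdry n) : HalfSpace n := ⟨x.1, le_of_eq x.2.symm⟩

/-- The subspace topology `τ(A)|_L` on `L` induced from `(X, τ(A))`. -/
def tauL (n : ℕ) (A : Set (EuclideanSpace ℝ (Fin n))) : TopologicalSpace (Bdry n) :=
  TopologicalSpace.induced (inclLX n) (tau n A)

/-- A space is perfect if every closed set is a `Gδ`-set. -/
def IsPerfectSpace (X : Type*) [TopologicalSpace X] : Prop :=
  ∀ s : Set X, IsClosed s → IsGδ s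

/-- An `Fσ`-set: a countable union of closed sets. -/
def IsFsigma {X : Type*} [TopologicalSpace X] (s : Set X) : Prop :=
  ∃ F : ℕ → Set X, (∀ i, IsClosed (F i)) ∧ s = ⋃ i, F i

/-- Countably paracompact: every countable open cover admits a locally finite open refinement. -/
def CountablyParacompact (X : Type*) [TopologicalSpace X] : Prop :=
  ∀ u : ℕ → Set X, (∀ i, IsOpen (u i)) → (⋃ i, u i) = Set.univ →
    ∃ (ι : Type) (v : ι → Set X), (∀ j, IsOpen (v j)) ∧ (⋃ j, v j) = Set.univ ∧
      LocallyFinite v ∧ ∀ j, ∃ i, v j ⊆ u i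

/-- A zero set: the zero locus of a continuous real-valued function. -/
def IsZeroSet {X : Type*} [TopologicalSpace X] (s : Set X) : Prop :=
  ∃ f : X → ℝ, Continuous f ∧ s = f ⁻¹' {0}

/-- `Y` is z-embedded in `X` if every zero set of the subspace `Y`
is the trace on `Y` of a zero set of `X`. -/
def ZEmbedded {X : Type*} [TopologicalSpace X] (Y : Set X) : Prop :=
  ∀ s : Set Y, IsZeroSet s → ∃ Z : Set X, IsZeroSet Z ∧ s = Subtype.val ⁻¹' Z

/-- `Y` is `C*`-embedded in `X` if every bounded continuous real-valued function on the
subspace `Y` extends to a bounded continuous function on `X`. -/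
def CStarEmbedded {X : Type*} [TopologicalSpace X] (Y : Set X) : Prop :=
  ∀ f : Y → ℝ, Continuous f → (∃ M, ∀ y, |f y| ≤ M) →
    ∃ g : X → ℝ, Continuous g ∧ (∃ M, ∀ x, |g x| ≤ M) ∧ ∀ y : Y, g ↑y = f y
end

section AuxNiem

open Metric Set TopologicalSpace Topology

variable {n : ℕ}

private lemma coord_le_dist (x y : EuclideanSpace ℝ (Fin n)) (i : Fin n) :
    dist (x i) (y i) ≤ dist x y := by
  rw [EuclideanSpace.dist_eq]
  calc dist (x i) (y i) = Real.sqrt (dist (x i) (y i) ^ 2) := (Real.sqrt_sq dist_nonneg).symm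
    _ ≤ _ := Real.sqrt_le_sqrt (Finset.single_le_sum
        (f := fun j => dist (x j) (y j) ^ 2) (fun j _ => sq_nonneg _) (Finset.mem_univ i))

private lemma lastCoord_apply (h : 0 < n) (x : EuclideanSpace ℝ (Fin n)) :
    lastCoord n x = x ⟨n - 1, Nat.sub_lt h one_pos⟩ := dif_pos h

private lemma lastCoord_dist (h : 0 < n) (x y : EuclideanSpace ℝ (Fin n)) :
    dist (lastCoord n x) (lastCoord n y) ≤ dist x y := by
  rw [lastCoord_apply h, lastCoord_apply h]; exact coord_le_dist x y _

private lemma norm_eVec (h : 0 < n) : ‖eVec n‖ = 1 := by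
  rw [eVec, dif_pos h, EuclideanSpace.norm_single, norm_one]

private lemma lastCoord_add_smul (h : 0 < n) (a : EuclideanSpace ℝ (Fin n)) (ε : ℝ) :
    lastCoord n (a + ε • eVec n) = lastCoord n a + ε := by
  have he : eVec n ⟨n - 1, Nat.sub_lt h one_pos⟩ = 1 := by
    rw [eVec, dif_pos h, EuclideanSpace.single_apply, if_pos rfl]
  rw [lastCoord_apply h, lastCoord_apply h, PiLp.add_apply, PiLp.smul_apply, he,
    smul_eq_mul, mul_one]

private lemma lastCoord_lt_of_mem_ball (h : 0 < n) {a y : EuclideanSpace ℝ (Fin n)} {ε : ℝ}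
    (hy : y ∈ ball a ε) : |lastCoord n y - lastCoord n a| < ε :=
  lt_of_le_of_lt (by rw [← Real.dist_eq]; exact lastCoord_dist h y a) (mem_ball.1 hy)

private lemma mem_tangentBall_self (a : EuclideanSpace ℝ (Fin n)) (ε : ℝ) :
    a ∈ tangentBall n a ε := Or.inl rfl

private lemma lastCoord_pos_of_mem_tb (h : 0 < n) {a y : EuclideanSpace ℝ (Fin n)} {ε : ℝ}
    (ha : lastCoord n a = 0) (hy : y ∈ ball (a + ε • eVec n) ε) :
    0 < lastCoord n y ∧ lastCoord n y < 2 * ε := by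
  have h1 := lastCoord_lt_of_mem_ball h hy
  rw [lastCoord_add_smul h, ha, zero_add] at h1
  obtain ⟨h2, h3⟩ := abs_lt.1 h1
  constructor <;> linarith

private lemma tangentBall_subset (h : 0 < n) (a : EuclideanSpace ℝ (Fin n)) {ε : ℝ}
    (hε : 0 < ε) : tangentBall n a ε ⊆ ball a (2 * ε) := by
  rintro y (rfl | hy)
  · exact mem_ball_self (by linarith)
  · have h1 : dist y a ≤ dist y (a + ε • eVec n) + dist (a + ε • eVec n) a :=
      dist_triangle _ _ _
    have h2 : dist (a + ε • eVec n) a = ε := by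
      rw [dist_eq_norm, add_sub_cancel_left, norm_smul, norm_eVec h,
        mul_one, Real.norm_eq_abs, abs_of_pos hε]
    have h3 := mem_ball.1 hy
    exact mem_ball.2 (by linarith)

private lemma isOpen_tau_of_mem {T : Set (EuclideanSpace ℝ (Fin n))} {s : Set (HalfSpace n)}
    (hs : s ∈ niemGen n T) : IsOpen[tau n T] s :=
  isOpen_generateFrom_of_mem hs

private lemma isOpen_of_pointwise {α : Type*} {g : Set (Set α)} {U : Set α}
    (h : ∀ x ∈ U, ∃ s ∈ g, x ∈ s ∧ s ⊆ U) : IsOpen[generateFrom g] U := by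
  have hU : U = ⋃₀ {s | s ∈ g ∧ s ⊆ U} := by
    apply Set.Subset.antisymm
    · intro x hx
      obtain ⟨s, hsg, hxs, hsU⟩ := h x hx
      exact ⟨s, ⟨hsg, hsU⟩, hxs⟩
    · rintro x ⟨s, ⟨_, hsU⟩, hxs⟩
      exact hsU hxs
  rw [hU]
  exact TopologicalSpace.GenerateOpen.sUnion _ fun s hs => .basic s hs.1

private lemma isOpen_tau_preimage (h : 0 < n) (T : Set (EuclideanSpace ℝ (Fin n)))
    {W : Set (EuclideanSpace ℝ (Fin n))} (hW : IsOpen W) :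
    IsOpen[tau n T] (Subtype.val ⁻¹' W : Set (HalfSpace n)) := by
  apply isOpen_of_pointwise
  intro x hx
  obtain ⟨δ, hδ0, hδ⟩ := Metric.isOpen_iff.1 hW x.1 hx
  have hx0 : 0 ≤ lastCoord n x.1 := x.2
  rcases hx0.lt_or_eq with hpos | hzero
  · refine ⟨Subtype.val ⁻¹' ball x.1 (min δ (lastCoord n x.1) / 2),
      Or.inl (Or.inl ⟨x.1, hpos, min δ (lastCoord n x.1) / 2, by positivity, ?_, rfl⟩),
      Set.mem_preimage.2 (mem_ball_self (by positivity)), ?_⟩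
    · calc min δ (lastCoord n x.1) / 2 ≤ lastCoord n x.1 / 2 := by
            gcongr; exact min_le_right _ _
        _ < lastCoord n x.1 := by linarith
    · intro y hy
      refine Set.mem_preimage.2 (hδ ?_)
      have h1 : dist y.1 x.1 < min δ (lastCoord n x.1) / 2 :=
        mem_ball.1 (Set.mem_preimage.1 hy)
      have h2 : min δ (lastCoord n x.1) ≤ δ := min_le_left _ _
      exact mem_ball.2 (by linarith)
  · by_cases hxT : x.1 ∈ T
    · exact ⟨Subtype.val ⁻¹' ball x.1 δ, Or.inl (Or.inr ⟨x.1, hxT, δ, hδ0, rfl⟩),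
        Set.mem_preimage.2 (mem_ball_self hδ0),
        fun y hy => Set.mem_preimage.2 (hδ (Set.mem_preimage.1 hy))⟩
    · refine ⟨Subtype.val ⁻¹' tangentBall n x.1 (δ / 3),
        Or.inr ⟨x.1, ⟨hzero.symm, hxT⟩, δ / 3, by linarith, rfl⟩,
        Set.mem_preimage.2 (mem_tangentBall_self _ _), ?_⟩
      intro y hy
      refine Set.mem_preimage.2 (hδ ?_)
      have h3 := tangentBall_subset h x.1 (by linarith : (0:ℝ) < δ / 3)
        (Set.mem_preimage.1 hy)
      have h1 : dist y.1 x.1 < 2 * (δ / 3) := mem_ball.1 h3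
      exact mem_ball.2 (by linarith)

private lemma ball_trick {α : Type*} [PseudoMetricSpace α] {a x : α} {ε : ℝ}
    (hx : x ∈ ball a ε) : ∃ ε' > 0, ball x ε' ⊆ ball a ε := by
  refine ⟨ε - dist x a, sub_pos.2 (mem_ball.1 hx), fun y hy => mem_ball.2 ?_⟩
  have h1 := mem_ball.1 hy
  have h2 := dist_triangle y x a
  linarith

private lemma exists_ball_subset (h : 0 < n) {T : Set (EuclideanSpace ℝ (Fin n))}
    {U : Set (HalfSpace n)} (hU : IsOpen[tau n T] U) :
    ∀ x ∈ U, (x.1 ∈ T ∨ 0 < lastCoord n x.1) →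
      ∃ ε > 0, (Subtype.val ⁻¹' ball x.1 ε : Set (HalfSpace n)) ⊆ U := by
  have hU' : TopologicalSpace.GenerateOpen (niemGen n T) U := hU
  clear hU
  induction hU' with
  | basic s hs =>
    intro x hx hgood
    rcases hs with (⟨a, _, ε, _, _, rfl⟩ | ⟨a, _, ε, _, rfl⟩) | ⟨a, ha, ε, hε0, rfl⟩
    · obtain ⟨ε', hε', hsub⟩ := ball_trick (Set.mem_preimage.1 hx)
      exact ⟨ε', hε', fun y hy =>
        Set.mem_preimage.2 (hsub (Set.mem_preimage.1 hy))⟩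
    · obtain ⟨ε', hε', hsub⟩ := ball_trick (Set.mem_preimage.1 hx)
      exact ⟨ε', hε', fun y hy =>
        Set.mem_preimage.2 (hsub (Set.mem_preimage.1 hy))⟩
    · rcases Set.mem_preimage.1 hx with hxa | hxb
      · exfalso
        have hxa' : x.1 = a := hxa
        rcases hgood with hxT | hxpos
        · exact ha.2 (hxa' ▸ hxT)
        · rw [hxa'] at hxpos
          have : lastCoord n a = 0 := ha.1
          linarith
      · obtain ⟨ε', hε', hsub⟩ := ball_trick hxb
        exact ⟨ε', hε', fun y hy =>
          Set.mem_preimage.2 (Or.inr (hsub (Set.mem_preimage.1 hy)))⟩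
  | univ => exact fun x _ _ => ⟨1, one_pos, fun y _ => trivial⟩
  | inter s t _ _ ihs iht =>
    intro x hx hgood
    obtain ⟨ε1, h1, hs1⟩ := ihs x hx.1 hgood
    obtain ⟨ε2, h2, hs2⟩ := iht x hx.2 hgood
    refine ⟨min ε1 ε2, lt_min h1 h2, fun y hy => ⟨?_, ?_⟩⟩
    · exact hs1 (Set.mem_preimage.2
        (ball_subset_ball (min_le_left _ _) (Set.mem_preimage.1 hy)))
    · exact hs2 (Set.mem_preimage.2
        (ball_subset_ball (min_le_right _ _) (Set.mem_preimage.1 hy)))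
  | sUnion S _ ih =>
    intro x hx hgood
    obtain ⟨s, hsS, hxs⟩ := hx
    obtain ⟨ε, hε, hsub⟩ := ih s hsS x hxs hgood
    exact ⟨ε, hε, fun y hy => ⟨s, hsS, hsub hy⟩⟩

private lemma isGδ_tau_preimage (h : 0 < n) (T : Set (EuclideanSpace ℝ (Fin n)))
    {Z : Set (EuclideanSpace ℝ (Fin n))} (hZ : IsGδ Z) :
    @IsGδ _ (tau n T) (Subtype.val ⁻¹' Z : Set (HalfSpace n)) := by
  obtain ⟨O, hO, hOc, rfl⟩ := hZ
  refine ⟨(fun s => (Subtype.val ⁻¹' s : Set (HalfSpace n))) '' O, ?_, hOc.image _, ?_⟩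
  · rintro t ⟨s, hs, rfl⟩
    exact isOpen_tau_preimage h T (hO s hs)
  · rw [Set.sInter_image, Set.preimage_sInter]

private lemma continuous_lastCoord (n : ℕ) : Continuous (lastCoord n) := by
  by_cases h : 0 < n
  · have he : lastCoord n = fun x => x ⟨n - 1, Nat.sub_lt h one_pos⟩ :=
      funext fun x => dif_pos h
    rw [he]
    exact (EuclideanSpace.proj (⟨n - 1, Nat.sub_lt h one_pos⟩ : Fin n)).continuous
  · have he : lastCoord n = fun _ => (0:ℝ) := funext fun x => dif_neg h
    rw [he]
    exact continuous_const

private lemma isOpen_openHalf : IsOpen (OpenHalf n) :=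
  isOpen_lt continuous_const (continuous_lastCoord n)

private lemma isClosed_bdry : IsClosed (Bdry n) :=
  isClosed_eq (continuous_lastCoord n) continuous_const

private lemma isGδ_tangent (h : 0 < n) (T : Set (EuclideanSpace ℝ (Fin n)))
    {S : Set (HalfSpace n)} (hS : ∀ x ∈ S, x.1 ∈ Bdry n \ T) :
    @IsGδ _ (tau n T) S := by
  letI := tau n T
  have key : S = ⋂ k : ℕ, ⋃ a ∈ S,
      (Subtype.val ⁻¹' tangentBall n a.1 (1 / (k + 1)) : Set (HalfSpace n)) := by
    apply Subset.antisymm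
    · intro x hx
      exact mem_iInter.2 fun k =>
        mem_biUnion hx (Set.mem_preimage.2 (mem_tangentBall_self _ _))
    · intro x hx
      obtain ⟨a, haS, hmem⟩ := mem_iUnion₂.1 (mem_iInter.1 hx 0)
      rcases Set.mem_preimage.1 hmem with heq | hball
      · have : x = a := Subtype.ext heq
        rw [this]; exact haS
      · exfalso
        have hBa : lastCoord n a.1 = 0 := (hS a haS).1
        have hpos : 0 < lastCoord n x.1 := (lastCoord_pos_of_mem_tb h hBa hball).1
        obtain ⟨k, hk⟩ := exists_nat_gt (2 / lastCoord n x.1)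
        obtain ⟨b, hbS, hmem'⟩ := mem_iUnion₂.1 (mem_iInter.1 hx k)
        rcases Set.mem_preimage.1 hmem' with heq' | hball'
        · have hx0 : lastCoord n x.1 = 0 := by
            have : x.1 = b.1 := heq'
            rw [this]; exact (hS b hbS).1
          linarith
        · have h2 := (lastCoord_pos_of_mem_tb h (hS b hbS).1 hball').2
          have hkl : 2 < (k + 1 : ℝ) * lastCoord n x.1 := by
            have h3 := (div_lt_iff₀ hpos).1 hk
            nlinarith
          have h4 : 2 * (1 / (k + 1 : ℝ)) < lastCoord n x.1 := by
            rw [mul_one_div, div_lt_iff₀ (by positivity)]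
            linarith
          linarith
  rw [key]
  exact IsGδ.iInter_of_isOpen fun k => isOpen_biUnion fun a ha =>
    isOpen_tau_of_mem (Or.inr ⟨a.1, hS a ha, 1 / (k + 1), by positivity, rfl⟩)

private lemma perfect_tau (h : 0 < n) {T : Set (EuclideanSpace ℝ (Fin n))}
    (hT : T ⊆ Bdry n) (hTg : IsGδ T) :
    @IsPerfectSpace (HalfSpace n) (tau n T) := by
  letI := tau n T
  intro F hF
  set W : Set (HalfSpace n) := Subtype.val ⁻¹' (T ∪ OpenHalf n) with hWdef
  set C : Set (EuclideanSpace ℝ (Fin n)) := closure (Subtype.val '' (F ∩ W)) with hCdef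
  have hFW : F ∩ W = (Subtype.val ⁻¹' C) ∩ W := by
    apply Subset.antisymm
    · exact fun x hx => ⟨subset_closure (mem_image_of_mem _ hx), hx.2⟩
    · rintro x ⟨hxC, hxW⟩
      refine ⟨?_, hxW⟩
      by_contra hxF
      have hopen : IsOpen (Fᶜ : Set (HalfSpace n)) := hF.isOpen_compl
      have hgood : x.1 ∈ T ∨ 0 < lastCoord n x.1 := hxW
      obtain ⟨ε, hε0, hball⟩ := exists_ball_subset h hopen x hxF hgood
      obtain ⟨y, hy, hdist⟩ := Metric.mem_closure_iff.1 hxC ε hε0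
      obtain ⟨z, hz, rfl⟩ := hy
      have hzmem : z ∈ (Subtype.val ⁻¹' ball x.1 ε : Set (HalfSpace n)) :=
        Set.mem_preimage.2 (mem_ball.2 (by rw [dist_comm]; exact hdist))
      exact (hball hzmem) hz.1
  have hGδW : @IsGδ _ (tau n T) W :=
    isGδ_tau_preimage h T (hTg.union isOpen_openHalf.isGδ)
  have hGδ1 : IsGδ (F ∩ W) := by
    rw [hFW]
    exact (isGδ_tau_preimage h T isClosed_closure.isGδ).inter hGδW
  have hGδ2 : IsGδ (F ∩ Wᶜ) := by
    apply isGδ_tangent h T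
    rintro x ⟨_, hxW⟩
    have hnot : ¬ (x.1 ∈ T ∨ 0 < lastCoord n x.1) := hxW
    push_neg at hnot
    have hx0 : 0 ≤ lastCoord n x.1 := x.2
    exact ⟨le_antisymm hnot.2 hx0, hnot.1⟩
  have hdecomp : F = (F ∩ W) ∪ (F ∩ Wᶜ) := (Set.inter_union_compl F W).symm
  rw [hdecomp]
  exact hGδ1.union hGδ2

private lemma not_lindelof_tau (h : 0 < n) (T : Set (EuclideanSpace ℝ (Fin n)))
    {D : Set (EuclideanSpace ℝ (Fin n))} (hD : D ⊆ Bdry n \ T)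
    (hDcl : IsClosed D) (hDu : ¬ D.Countable) :
    ¬ @LindelofSpace (HalfSpace n) (tau n T) := by
  intro hL
  letI := tau n T
  set D' : Set (HalfSpace n) := Subtype.val ⁻¹' D with hD'def
  let U : Option D' → Set (HalfSpace n) := fun o =>
    Option.elim o D'ᶜ fun d => Subtype.val ⁻¹' tangentBall n d.1.1 1
  have hUo : ∀ o, IsOpen (U o) := by
    rintro (_ | d)
    · have he : (D'ᶜ : Set (HalfSpace n)) = Subtype.val ⁻¹' Dᶜ := rfl
      show IsOpen (D'ᶜ : Set (HalfSpace n))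
      rw [he]
      exact isOpen_tau_preimage h T hDcl.isOpen_compl
    · exact isOpen_tau_of_mem (Or.inr ⟨d.1.1, hD d.2, 1, one_pos, rfl⟩)
  have hUc : (univ : Set (HalfSpace n)) ⊆ ⋃ o, U o := by
    intro x _
    by_cases hx : x ∈ D'
    · exact mem_iUnion.2 ⟨some ⟨x, hx⟩, Set.mem_preimage.2 (mem_tangentBall_self _ _)⟩
    · exact mem_iUnion.2 ⟨none, hx⟩
  obtain ⟨r, hrc, hrcov⟩ := (@isLindelof_univ _ _ hL).elim_countable_subcover U hUo hUc
  have hmem : ∀ e : D', some e ∈ r := by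
    intro e
    obtain ⟨o, hor, heo⟩ := mem_iUnion₂.1 (hrcov (mem_univ e.1))
    match o with
    | none => exact absurd e.2 heo
    | some d =>
      rcases Set.mem_preimage.1 heo with heq | hball
      · have : e = d := Subtype.ext (Subtype.ext heq)
        rw [this]; exact hor
      · exfalso
        have h0 : lastCoord n e.1.1 = 0 := (hD e.2).1
        have h1 := (lastCoord_pos_of_mem_tb h (hD d.2).1 hball).1
        linarith
  have hrcnt : Countable r := hrc.to_subtype
  have hcD' : Countable D' := by
    have hinj : Function.Injective (fun e : D' => (⟨some e, hmem e⟩ : r)) := by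
      intro a b hab
      have : (some a : Option D') = some b := congrArg Subtype.val hab
      exact Option.some_injective _ this
    exact Function.Injective.countable hinj
  have hDcnt : D.Countable := by
    have h1 : (Subtype.val '' D' : Set (EuclideanSpace ℝ (Fin n))).Countable :=
      (Set.countable_coe_iff.mp hcD').image _
    have h2 : Subtype.val '' D' = D := by
      rw [Set.image_preimage_eq_inter_range, Subtype.range_coe]
      exact inter_eq_left.2 fun x hx => le_of_eq ((hD hx).1).symm
    rwa [h2] at h1
  exact hDu hDcnt

private lemma not_countable_Ici (a : ℝ) : ¬ (Set.Ici a).Countable := by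
  intro hc
  have h1 : (Cardinal.mk (Set.Ici a)) ≤ Cardinal.aleph0 :=
    Cardinal.le_aleph0_iff_set_countable.2 hc
  rw [Cardinal.mk_Ici_real a] at h1
  exact Cardinal.aleph0_lt_continuum.not_ge h1

end AuxNiem

/-- For every `n ≥ 2`, if `A` is an uncountable compact subset of `L` (Euclidean topology),
then `(X, τ(A))`, as well as `(X, τ(L \ A))`, is perfect but not Lindelöf. -/
theorem tauA_perfect_not_lindelof_of_compact (n : ℕ) (hn : 2 ≤ n)
    (A : Set (EuclideanSpace ℝ (Fin n))) (hA : A ⊆ Bdry n)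
    (hAc : IsCompact A) (hAu : ¬ A.Countable) :
    (@IsPerfectSpace (HalfSpace n) (tau n A) ∧ ¬ @LindelofSpace (HalfSpace n) (tau n A)) ∧
    (@IsPerfectSpace (HalfSpace n) (tau n (Bdry n \ A)) ∧
      ¬ @LindelofSpace (HalfSpace n) (tau n (Bdry n \ A))) := by
  have h0 : 0 < n := lt_of_lt_of_le two_pos hn
  have hAgd : IsGδ A := hAc.isClosed.isGδ
  have hBd : Bdry n \ A ⊆ Bdry n := diff_subset
  have hBgd : IsGδ (Bdry n \ A) := by
    rw [diff_eq]
    exact isClosed_bdry.isGδ.inter hAc.isClosed.isOpen_compl.isGδ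
  obtain ⟨R, hR⟩ := hAc.isBounded.subset_closedBall 0
  set e0 : EuclideanSpace ℝ (Fin n) := EuclideanSpace.single ⟨0, h0⟩ 1 with he0
  have hiso : Isometry (fun t : ℝ => t • e0) := Isometry.of_dist_eq (fun t s => by
    rw [dist_eq_norm, ← sub_smul, norm_smul, he0, EuclideanSpace.norm_single, norm_one,
      mul_one, Real.norm_eq_abs, Real.dist_eq])
  set D : Set (EuclideanSpace ℝ (Fin n)) := (fun t : ℝ => t • e0) '' Set.Ici (|R| + 1)
    with hDdef
  have hDcl : IsClosed D := hiso.isClosedEmbedding.isClosedMap _ isClosed_Ici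
  have hDlast : ∀ t : ℝ, lastCoord n (t • e0) = 0 := by
    intro t
    rw [lastCoord_apply h0, PiLp.smul_apply, he0, EuclideanSpace.single_apply, if_neg, smul_zero]
    intro hcontra
    have : n - 1 = 0 := by simpa [Fin.ext_iff] using hcontra
    omega
  have hDsub : D ⊆ Bdry n \ A := by
    rintro x ⟨t, ht, rfl⟩
    refine ⟨hDlast t, fun hxA => ?_⟩
    have hball := hR hxA
    rw [mem_closedBall_zero_iff, norm_smul, he0, EuclideanSpace.norm_single, norm_one,
      mul_one, Real.norm_eq_abs] at hball
    have h1 : |R| + 1 ≤ t := ht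
    have h2 : |t| = t := abs_of_pos (by nlinarith [abs_nonneg R])
    nlinarith [le_abs_self R]
  have hDu : ¬ D.Countable := by
    intro hc
    apply not_countable_Ici (|R| + 1)
    have hsub : Set.Ici (|R| + 1) ⊆ (fun t : ℝ => t • e0) ⁻¹' D :=
      fun t ht => ⟨t, ht, rfl⟩
    exact Set.Countable.mono hsub (hc.preimage hiso.injective)
  have hAsub : A ⊆ Bdry n \ (Bdry n \ A) :=
    fun a ha => ⟨hA ha, fun hcon => hcon.2 ha⟩
  exact ⟨⟨perfect_tau h0 hA hAgd, not_lindelof_tau h0 A hDsub hDcl hDu⟩,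
    ⟨perfect_tau h0 hBd hBgd,
      not_lindelof_tau h0 (Bdry n \ A) hAsub hAc.isClosed hAu⟩⟩
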